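/- Let X be a cut-point space densely contained in a compact metrizable space Y such that Y \ X is path-connected. Then Y is a reducible continuum: for every pair of points p, q ∈ Y there is a proper subcontinuum of Y containing both. -/
import Mathlib

private lemma aux_contra {Z : Type*} [TopologicalSpace Z] [PreconnectedSpace Z]
    {x : Z} {u v U V : Set Z}
    (hu : IsOpen u) (hv : IsOpen v) (hU : IsOpen U) (hV : IsOpen V)
    (hs : ({x}ᶜ : Set Z) ⊆ u ∪ v) (hdisj : ({x}ᶜ : Set Z) ∩ (u ∩ v) = ∅)
    (hcover : (({x}ᶜ : Set Z) ∩ u) ∪ {x} ⊆ U ∪ V)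
    (hxU : x ∈ U)
    (hVne : (((({x}ᶜ : Set Z) ∩ u) ∪ {x}) ∩ V).Nonempty)
    (hUV : ((({x}ᶜ : Set Z) ∩ u) ∪ {x}) ∩ (U ∩ V) = ∅) : False := by
  have hxV : x ∉ V := fun h =>
    Set.eq_empty_iff_forall_notMem.mp hUV x ⟨Or.inr rfl, hxU, h⟩
  obtain ⟨a, haS, haV⟩ := hVne
  have haA : a ∈ ({x}ᶜ : Set Z) ∩ u := by
    rcases haS with h | h
    · exact h
    · exact absurd haV (by simpa [Set.mem_singleton_iff.mp h] using hxV)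
  have hpc := isPreconnected_univ (α := Z)
  have hcov2 : (Set.univ : Set Z) ⊆ (U ∪ v) ∪ (V ∩ u) := by
    intro z _
    by_cases hzx : z = x
    · exact Or.inl (Or.inl (hzx ▸ hxU))
    · rcases hs hzx with hzu | hzv
      · have hzS : z ∈ (({x}ᶜ : Set Z) ∩ u) ∪ {x} := Or.inl ⟨hzx, hzu⟩
        rcases hcover hzS with hzU | hzV
        · exact Or.inl (Or.inl hzU)
        · exact Or.inr ⟨hzV, hzu⟩
      · exact Or.inl (Or.inr hzv)
  have hne1 : ((Set.univ : Set Z) ∩ (U ∪ v)).Nonempty :=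
    ⟨x, trivial, Or.inl hxU⟩
  have hne2 : ((Set.univ : Set Z) ∩ (V ∩ u)).Nonempty :=
    ⟨a, trivial, haV, haA.2⟩
  obtain ⟨z, -, hz1, hz2, hz3⟩ :=
    hpc (U ∪ v) (V ∩ u) (hU.union hv) (hV.inter hu) hcov2 hne1 hne2
  have hzx : z ≠ x := fun h => hxV (h ▸ hz2)
  rcases hz1 with hzU | hzv
  · exact Set.eq_empty_iff_forall_notMem.mp hUV z ⟨Or.inl ⟨hzx, hz3⟩, hzU, hz2⟩
  · exact Set.eq_empty_iff_forall_notMem.mp hdisj z ⟨hzx, hz3, hzv⟩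

private lemma aux_pre {Z : Type*} [TopologicalSpace Z] [PreconnectedSpace Z]
    {x : Z} {u v : Set Z} (hu : IsOpen u) (hv : IsOpen v)
    (hs : ({x}ᶜ : Set Z) ⊆ u ∪ v) (hdisj : ({x}ᶜ : Set Z) ∩ (u ∩ v) = ∅) :
    IsPreconnected ((({x}ᶜ : Set Z) ∩ u) ∪ {x}) := by
  intro U V hU hV hcover hUne hVne
  by_contra h
  rw [Set.not_nonempty_iff_eq_empty] at h
  have hx : x ∈ U ∪ V := hcover (Or.inr rfl)
  rcases hx with hxU | hxV
  · exact aux_contra hu hv hU hV hs hdisj hcover hxU hVne h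
  · refine aux_contra hu hv hV hU hs hdisj (fun z hz => (hcover hz).symm) hxV hUne ?_
    rwa [Set.inter_comm U V] at h

/-- Let `X` be a cut-point space densely contained in a compact metrizable space `Y`
such that `Y \ X` is path-connected.  Then `Y` is a reducible continuum: every pair of
points of `Y` lies in a proper subcontinuum of `Y`. -/
theorem stmt_10 {Y : Type*} [TopologicalSpace Y] [CompactSpace Y]
    [TopologicalSpace.MetrizableSpace Y] (X : Set Y) (hdense : Dense X)
    (hconn : ConnectedSpace X)
    (hcut : ∀ x : X, ¬ IsPreconnected (({x}ᶜ : Set X)))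
    (hrem : IsPathConnected (Xᶜ : Set Y)) :
    ∀ p q : Y, ∃ K : Set Y, IsCompact K ∧ IsPreconnected K ∧ p ∈ K ∧ q ∈ K ∧
      K ≠ Set.univ := by
  letI := TopologicalSpace.metrizableSpaceMetric Y
  have hXne : X.Nonempty := by
    obtain ⟨x⟩ := hconn.toNonempty
    exact ⟨x, x.2⟩
  -- main claim when `p ∈ X`
  have key : ∀ p q : Y, p ∈ X → ∃ K : Set Y, IsCompact K ∧ IsPreconnected K ∧
      p ∈ K ∧ q ∈ K ∧ K ≠ Set.univ := by
    intro p q hp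
    set x : X := ⟨p, hp⟩ with hx
    have hcut' := hcut x
    unfold IsPreconnected at hcut'
    push_neg at hcut'
    obtain ⟨u, v, hu, hv, hcov, hune, hvne, hdisj⟩ := hcut'
    -- the two halves
    have hAu : IsPreconnected ((({x}ᶜ : Set X) ∩ u) ∪ {x}) :=
      aux_pre hu hv hcov hdisj
    have hAv : IsPreconnected ((({x}ᶜ : Set X) ∩ v) ∪ {x}) :=
      aux_pre hv hu (by rwa [Set.union_comm]) (by rwa [Set.inter_comm v u])
    -- push to Y and take closures
    have hcont : Continuous (Subtype.val : X → Y) := continuous_subtype_val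
    set Su : Set Y := Subtype.val '' ((({x}ᶜ : Set X) ∩ u) ∪ {x}) with hSu
    set Sv : Set Y := Subtype.val '' ((({x}ᶜ : Set X) ∩ v) ∪ {x}) with hSv
    have hCu : IsPreconnected (closure Su) := (hAu.image _ hcont.continuousOn).closure
    have hCv : IsPreconnected (closure Sv) := (hAv.image _ hcont.continuousOn).closure
    have hpSu : p ∈ Su := ⟨x, Or.inr rfl, rfl⟩
    have hpSv : p ∈ Sv := ⟨x, Or.inr rfl, rfl⟩
    -- the two closures cover Y
    have hXeq : X = Su ∪ Sv := by
      rw [hSu, hSv, ← Set.image_union]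
      ext z
      constructor
      · intro hz
        refine ⟨⟨z, hz⟩, ?_, rfl⟩
        by_cases hzx : (⟨z, hz⟩ : X) = x
        · exact Or.inl (Or.inr hzx)
        · rcases hcov hzx with h | h
          · exact Or.inl (Or.inl ⟨hzx, h⟩)
          · exact Or.inr (Or.inl ⟨hzx, h⟩)
      · rintro ⟨w, -, rfl⟩
        exact w.2
    have hqcov : q ∈ closure Su ∪ closure Sv := by
      rw [← closure_union, ← hXeq, hdense.closure_eq]
      trivial
    -- properness: a point of the other half is not in the closure
    have hnotin : ∀ (w w' : Set X), (({x}ᶜ : Set X) ∩ (w ∩ w')) = ∅ →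
        ∀ b : X, b ∈ ({x}ᶜ : Set X) ∩ w' → IsOpen w' →
        (b : Y) ∉ closure (Subtype.val '' ((({x}ᶜ : Set X) ∩ w) ∪ {x})) := by
      intro w w' hdisj' b hb hw'
      intro hbc
      have hemb : Topology.IsEmbedding (Subtype.val : X → Y) := Topology.IsEmbedding.subtypeVal
      have : b ∈ closure ((({x}ᶜ : Set X) ∩ w) ∪ {x}) := by
        rw [hemb.closure_eq_preimage_closure_image]
        exact hbc
      have hopen : IsOpen (({x}ᶜ : Set X) ∩ w') :=
        (isOpen_compl_singleton).inter hw'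
      obtain ⟨c, hc1, hc2⟩ := mem_closure_iff.mp this _ hopen hb
      rcases hc2 with hcA | hcx
      · exact Set.eq_empty_iff_forall_notMem.mp hdisj' c ⟨hc1.1, hcA.2, hc1.2⟩
      · exact hc1.1 hcx
    obtain ⟨bu, hbu⟩ := hune
    obtain ⟨bv, hbv⟩ := hvne
    rcases hqcov with hq | hq
    · refine ⟨closure Su, isClosed_closure.isCompact, hCu, subset_closure hpSu, hq, ?_⟩
      intro hcl
      exact hnotin u v hdisj bv hbv hv (hcl ▸ Set.mem_univ _)
    · refine ⟨closure Sv, isClosed_closure.isCompact, hCv, subset_closure hpSv, hq, ?_⟩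
      intro hcl
      refine hnotin v u (by rwa [Set.inter_comm v u]) bu hbu hu (hcl ▸ Set.mem_univ _)
  intro p q
  by_cases hp : p ∈ X
  · exact key p q hp
  by_cases hq : q ∈ X
  · obtain ⟨K, h1, h2, h3, h4, h5⟩ := key q p hq
    exact ⟨K, h1, h2, h4, h3, h5⟩
  · obtain ⟨γ, hγ⟩ := hrem.joinedIn p hp q hq
    refine ⟨Set.range γ, isCompact_range γ.continuous,
      isPreconnected_range γ.continuous, ⟨0, γ.source⟩, ⟨1, γ.target⟩, ?_⟩
    intro hcl
    obtain ⟨x₀, hx₀⟩ := hXne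
    have : x₀ ∈ Set.range γ := hcl ▸ Set.mem_univ _
    obtain ⟨t, ht⟩ := this
    exact (hγ t) (ht ▸ hx₀)
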